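/- Suppose the family Υ_n is admissible relative to the sets Ω(n,m) for G ↷ (X,ν). Then for every m and every f ∈ L¹(ν×θ) ∩ L^∞(ν×θ), limsup_{n→∞} ‖W_{n,m}f − f‖_{L¹(ν×θ)} ≤ D(m)‖f‖_{L^∞(ν×θ)}. -/

import Mathlib

open MeasureTheory Filter Metric Set
open scoped ENNReal

namespace StableRatio

variable {G : Type*} [Group G] [Countable G]

/-- The Radon–Nikodym derivative `d(ν∘g)/dν`, where `(ν∘g)(A) = ν(gA)`,
so that `ν∘g` is the pushforward of `ν` under the action of `g⁻¹`. -/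
noncomputable def RN {Z : Type*} [MeasurableSpace Z] (act : G → Z → Z) (ν : Measure Z)
    (g : G) (z : Z) : ℝ :=
  ((ν.map (act g⁻¹)).rnDeriv ν z).toReal

/-- `R(g,η) = log (d(ν∘g)/dν)(η)`. -/
noncomputable def Rlog {Z : Type*} [MeasurableSpace Z] (act : G → Z → Z) (ν : Measure Z)
    (g : G) (z : Z) : ℝ :=
  Real.log (RN act ν g z)

/-- A family of functions `Υ n : G → Z → Z → ℝ` is admissible relative to a family of
closed subsets `Ω n m ⊆ Z`, with constants `D C : ℕ → ℝ`, `N : ℕ → ℕ` and moduli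
`fbd : ℕ → ℕ → ℝ`.  Here `dZ` is the metric on `Z` and `act` the (quasi-invariant)
action of `G` on `(Z,ν)`. -/
structure IsRelAdmissible {Z : Type*} [MeasurableSpace Z] [TopologicalSpace Z]
    (act : G → Z → Z) (dZ : Z → Z → ℝ) (ν : Measure Z) [SFinite ν]
    (Υ : ℕ → G → Z → Z → ℝ) (Ω : ℕ → ℕ → Set Z)
    (D C : ℕ → ℝ) (N : ℕ → ℕ) (fbd : ℕ → ℕ → ℝ) : Prop where
  meas_Υ : ∀ (n : ℕ) (g : G), Measurable (Function.uncurry (Υ n g))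
  nonneg_Υ : ∀ (n : ℕ) (g : G) (b b' : Z), 0 ≤ Υ n g b b'
  closed_Ω : ∀ n m : ℕ, IsClosed (Ω n m)
  D_pos : ∀ m : ℕ, 0 < D m
  D_lim : Tendsto D atTop (nhds 0)
  Ω_big : ∀ n m : ℕ, ENNReal.ofReal (1 - D m) < ν (Ω n m)
  f_lim : ∀ m : ℕ, Tendsto (fbd m) atTop (nhds 0)
  close : ∀ (n m : ℕ) (g : G) (b b' : Z), b ∈ Ω n m → 0 < Υ n g b b' →
    dZ b b' < fbd m n ∧ dZ (act g⁻¹ b) (act g⁻¹ b') < fbd m n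
  C_pos : ∀ m : ℕ, 0 < C m
  N_pos : ∀ m : ℕ, 0 < N m
  R_bound : ∀ (m n : ℕ), N m < n → ∀ g : G, ∀ᵐ p ∂(ν.prod ν),
    p.1 ∈ Ω n m → 0 < Υ n g p.1 p.2 →
      (|Rlog act ν g⁻¹ p.1| + |Rlog act ν g⁻¹ p.2| < C m ∧
        1 / C m ≤ |Rlog act ν g⁻¹ p.1 - Rlog act ν g⁻¹ p.2|)
  normalized : ∀ (n : ℕ) (b : Z),
    (∑' g : G, ∫⁻ b', ENNReal.ofReal (Υ n g b b') ∂ν) = 1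
  bdd₁ : ∀ (m n : ℕ), N m < n → ∀ᵐ b' ∂ν,
    (∫⁻ b in Ω n m, ∑' g : G, ENNReal.ofReal (Υ n g b b') ∂ν) ≤ ENNReal.ofReal (C m)
  bdd₂ : ∀ (m n : ℕ), N m < n → ∀ᵐ b' ∂ν,
    (∫⁻ b in Ω n m, ∑' g : G, ENNReal.ofReal (Υ n g b (act g b') * RN act ν g b') ∂ν)
      ≤ ENNReal.ofReal (C m)
  bdd₃ : ∀ (m n : ℕ), N m < n → ∀ᵐ b ∂ν,
    (∫⁻ b', ∑' g : G, Set.indicator (Ω n m) (fun _ => (1 : ℝ≥0∞)) (act g b)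
        * ENNReal.ofReal (Υ n g (act g b) b' * RN act ν g b') ∂ν) ≤ ENNReal.ofReal (C m)

/-- The measure `θ` on `ℝ` with `dθ = (1/2) e^{-|t|} dt`. -/
noncomputable def theta : Measure ℝ :=
  MeasureTheory.volume.withDensity (fun t : ℝ => ENNReal.ofReal ((1 / 2) * Real.exp (-|t|)))

instance : SFinite theta := by unfold theta; infer_instance

/-- The measure `ζ_{n,m}` on `ℝ`:
`ζ_{n,m}(E) = Σ_{g∈G} ∫∫ 1_E(R(g⁻¹,b') − R(g⁻¹,b)) 1_{Ω(n,m)}(b) Υ_n(g,b,b') dν(b) dν(b')`. -/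
noncomputable def zeta {Z : Type*} [MeasurableSpace Z] (act : G → Z → Z) (ν : Measure Z)
    [SFinite ν] (Υ : ℕ → G → Z → Z → ℝ) (Ω : ℕ → ℕ → Set Z) (n m : ℕ) : Measure ℝ :=
  Measure.sum fun g : G =>
    ((ν.prod ν).withDensity fun p =>
        Set.indicator (Ω n m) (fun _ => (1 : ℝ≥0∞)) p.1 * ENNReal.ofReal (Υ n g p.1 p.2)).map
      fun p => Rlog act ν g⁻¹ p.2 - Rlog act ν g⁻¹ p.1

/-- The measure `ζ_{n,b}` on `ℝ`:
`ζ_{n,b}(E) = Σ_{g∈G} ∫ 1_E(R(g⁻¹,b') − R(g⁻¹,b)) Υ_n(g,b,b') dν(b')`. -/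
noncomputable def zetaB {Z : Type*} [MeasurableSpace Z] (act : G → Z → Z) (ν : Measure Z)
    (Υ : ℕ → G → Z → Z → ℝ) (n : ℕ) (b : Z) : Measure ℝ :=
  Measure.sum fun g : G =>
    (ν.withDensity fun b' => ENNReal.ofReal (Υ n g b b')).map
      fun b' => Rlog act ν g⁻¹ b' - Rlog act ν g⁻¹ b

/-- `μ` is a weak-* limit point of the sequence `μs`, i.e. the limit of some subsequence
in the weak-* topology (integration against bounded continuous functions). -/
def WeakStarLimitPoint (μs : ℕ → Measure ℝ) (μ : Measure ℝ) : Prop :=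
  ∃ φ : ℕ → ℕ, StrictMono φ ∧
    ∀ f : BoundedContinuousFunction ℝ ℝ,
      Tendsto (fun k => ∫ x, f x ∂(μs (φ k))) atTop (nhds (∫ x, f x ∂μ))

/-- `T` belongs to the (topological) support of the measure `μ` on `ℝ`. -/
def MemSupport (μ : Measure ℝ) (T : ℝ) : Prop :=
  ∀ ε : ℝ, 0 < ε → 0 < μ (Metric.ball T ε)

/-- `r` belongs to the ratio set of the action `act` of `G` on `(Z,μ)`. -/
def InRatioSet {Z : Type*} [MeasurableSpace Z] (act : G → Z → Z) (μ : Measure Z)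
    (r : ℝ) : Prop :=
  ∀ A : Set Z, MeasurableSet A → 0 < μ A → ∀ ε : ℝ, 0 < ε →
    ∃ A' : Set Z, MeasurableSet A' ∧ A' ⊆ A ∧ 0 < μ A' ∧
      ∃ g : G, g ≠ 1 ∧ act g '' A' ⊆ A ∧ ∀ b ∈ A', |RN act μ g b - r| ≤ ε

/-- `r` belongs to the stable ratio set of the action `act` of `G` on `(Z,ν)`:
`r` is in the ratio set of the product of the action with every probability
measure preserving action of `G`. -/
def InStableRatioSet {Z : Type*} [MeasurableSpace Z] (act : G → Z → Z) (ν : Measure Z)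
    [SFinite ν] (r : ℝ) : Prop :=
  ∀ (Y : Type) [MeasurableSpace Y] (κ : Measure Y) [IsProbabilityMeasure κ]
    (aY : G → Y → Y),
    (∀ g : G, Measurable (aY g)) → aY 1 = id →
    (∀ g h : G, aY (g * h) = aY g ∘ aY h) →
    (∀ g : G, κ.map (aY g) = κ) →
    InRatioSet (fun g (p : Z × Y) => (act g p.1, aY g p.2)) (ν.prod κ) r

/-- The operator `W_{n,m}`. -/
noncomputable def Wop {Z : Type*} [MeasurableSpace Z] (ν : Measure Z)
    (Υ : ℕ → G → Z → Z → ℝ) (Ω : ℕ → ℕ → Set Z) (n m : ℕ)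
    (f : Z → ℝ → ℝ) (b : Z) (t : ℝ) : ℝ :=
  ∑' g : G, ∫ b', Set.indicator (Ω n m) (fun _ => (1 : ℝ)) b * Υ n g b b' * f b' t ∂ν

/-- The operator `X_{n,m}`. -/
noncomputable def Xop {Z : Type*} [MeasurableSpace Z] (act : G → Z → Z) (ν : Measure Z)
    (Υ : ℕ → G → Z → Z → ℝ) (Ω : ℕ → ℕ → Set Z) (n m : ℕ)
    (f : Z → ℝ → ℝ) (b : Z) (t : ℝ) : ℝ :=
  ∑' g : G, ∫ b', Set.indicator (Ω n m) (fun _ => (1 : ℝ)) b * Υ n g b b' *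
      f (act g⁻¹ b') (t + Rlog act ν g⁻¹ b') ∂ν

/-- The operator `Y_{n,m}`. -/
noncomputable def Yop {Z : Type*} [MeasurableSpace Z] (act : G → Z → Z) (ν : Measure Z)
    (Υ : ℕ → G → Z → Z → ℝ) (Ω : ℕ → ℕ → Set Z) (n m : ℕ)
    (f : Z → ℝ → ℝ) (b : Z) (t : ℝ) : ℝ :=
  ∑' g : G, ∫ b', Set.indicator (Ω n m) (fun _ => (1 : ℝ)) b * Υ n g b b' *
      f (act g⁻¹ b) (t + Rlog act ν g⁻¹ b') ∂ν

/-- The operator `L_{n,m}`. -/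
noncomputable def Lop {Z : Type*} [MeasurableSpace Z] (act : G → Z → Z) (ν : Measure Z)
    (Υ : ℕ → G → Z → Z → ℝ) (Ω : ℕ → ℕ → Set Z) (n m : ℕ)
    (f : Z → ℝ → ℝ) (b : Z) (t : ℝ) : ℝ :=
  ∑' g : G, ∫ b', Set.indicator (Ω n m) (fun _ => (1 : ℝ)) b * Υ n g b b' *
      f b (t + Rlog act ν g⁻¹ b' - Rlog act ν g⁻¹ b) ∂ν


theorem theta_isProbability : IsProbabilityMeasure theta := by
  constructor
  have hint1 : Integrable (fun t : ℝ => Real.exp (-|t|)) volume := by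
    have hIoi : IntegrableOn (fun t : ℝ => Real.exp (-|t|)) (Set.Ioi 0) volume := by
      refine (exp_neg_integrableOn_Ioi 0 one_pos).congr_fun (fun x hx => ?_) measurableSet_Ioi
      rw [abs_of_pos (Set.mem_Ioi.mp hx)]; ring_nf
    have hIic : IntegrableOn (fun t : ℝ => Real.exp (-|t|)) (Set.Iic 0) volume := by
      refine (integrableOn_exp_Iic 0).congr_fun (fun x hx => ?_) measurableSet_Iic
      rw [abs_of_nonpos (Set.mem_Iic.mp hx)]; ring_nf
    have h := hIic.union hIoi
    rw [Set.Iic_union_Ioi] at h; rwa [integrableOn_univ] at h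
  have hint : Integrable (fun t : ℝ => 1 / 2 * Real.exp (-|t|)) volume := hint1.const_mul _
  have hval : (∫ t : ℝ, 1 / 2 * Real.exp (-|t|)) = 1 := by
    rw [integral_const_mul, integral_comp_abs (f := fun x => Real.exp (-x)),
      integral_exp_neg_Ioi_zero]
    norm_num
  have h0 : theta Set.univ = ∫⁻ t, ENNReal.ofReal (1 / 2 * Real.exp (-|t|)) ∂volume := by
    rw [theta, withDensity_apply _ MeasurableSet.univ, Measure.restrict_univ]
  rw [h0, ← ofReal_integral_eq_lintegral_ofReal hint
    (Filter.Eventually.of_forall fun t => by positivity), hval, ENNReal.ofReal_one]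

theorem stmt5 {G X : Type*} [Group G] [Countable G]
    [MetricSpace X] [CompactSpace X] [MeasurableSpace X] [BorelSpace X]
    (act : G → X → X) (hact_one : act 1 = id)
    (hact_mul : ∀ g h : G, act (g * h) = act g ∘ act h)
    (hact_meas : ∀ g : G, Measurable (act g))
    (ν : Measure X) [IsProbabilityMeasure ν]
    (hqi : ∀ g : G, ν.map (act g) ≪ ν ∧ ν ≪ ν.map (act g))
    (Υ : ℕ → G → X → X → ℝ) (Ω : ℕ → ℕ → Set X)
    (D C : ℕ → ℝ) (N : ℕ → ℕ) (fbd : ℕ → ℕ → ℝ)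
    (hadm : IsRelAdmissible act (fun a b : X => dist a b) ν Υ Ω D C N fbd) :
    ∀ m : ℕ, ∀ f : X × ℝ → ℝ, Integrable f (ν.prod theta) → MemLp f ⊤ (ν.prod theta) →
      Filter.limsup
          (fun n => ∫ p, |Wop ν Υ Ω n m (Function.curry f) p.1 p.2 - f p| ∂(ν.prod theta))
          atTop
        ≤ D m * (eLpNorm f ⊤ (ν.prod theta)).toReal := by
  intro m f hf1 hfi
  classical
  have hθp : IsProbabilityMeasure theta := theta_isProbability
  set μ : Measure (X × ℝ) := ν.prod theta with hμdef
  haveI : IsProbabilityMeasure μ := by rw [hμdef]; infer_instance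
  set M : ℝ := (eLpNorm f ⊤ μ).toReal with hMdef
  have hM0 : 0 ≤ M := ENNReal.toReal_nonneg
  have hΩmeas : ∀ n, MeasurableSet (Ω n m) := fun n => (hadm.closed_Ω n m).measurableSet
  -- measurable representative of f
  obtain ⟨f', hf'sm, hff'⟩ : ∃ f' : X × ℝ → ℝ, StronglyMeasurable f' ∧ f =ᵐ[μ] f' :=
    ⟨hf1.1.mk f, hf1.1.stronglyMeasurable_mk, hf1.1.ae_eq_mk⟩
  have hf'm : Measurable f' := hf'sm.measurable
  have hf'int : Integrable f' μ := hf1.congr hff'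
  -- a.e. bound by M
  have hMae : ∀ᵐ p ∂μ, |f' p| ≤ M := by
    have h1 := enorm_ae_le_eLpNormEssSup f' μ
    have h2 : eLpNormEssSup f' μ = ENNReal.ofReal M := by
      rw [← eLpNorm_exponent_top, ← eLpNorm_congr_ae hff', hMdef,
        ENNReal.ofReal_toReal hfi.2.ne]
    filter_upwards [h1] with p hp
    rw [h2, Real.enorm_eq_ofReal_abs] at hp
    exact (ENNReal.ofReal_le_ofReal_iff hM0).mp hp
  -- good sections
  have hGood : ∀ᵐ p ∂μ, ∀ᵐ b' ∂ν, f (b', p.2) = f' (b', p.2) ∧ |f' (b', p.2)| ≤ M := by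
    have hcomb : ∀ᵐ p ∂μ, f p = f' p ∧ |f' p| ≤ M := hff'.and hMae
    have hq : Measure.QuasiMeasurePreserving (Prod.swap : ℝ × X → X × ℝ) (theta.prod ν) μ :=
      (Measure.measurePreserving_swap (μ := theta) (ν := ν)).quasiMeasurePreserving
    have hswap : ∀ᵐ r ∂(theta.prod ν), f r.swap = f' r.swap ∧ |f' r.swap| ≤ M :=
      hq.tendsto_ae.eventually hcomb
    have h2 := Measure.ae_ae_of_ae_prod hswap
    have h3 : ∀ᵐ t ∂theta, ∀ᵐ b' ∂ν, f (b', t) = f' (b', t) ∧ |f' (b', t)| ≤ M := by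
      filter_upwards [h2] with t ht
      filter_upwards [ht] with b' hb'
      simpa using hb'
    exact (Measure.quasiMeasurePreserving_snd (μ := ν) (ν := theta)).tendsto_ae.eventually h3
  -- the key quantitative estimate
  have key : ∀ ε : ℝ, 0 < ε → ∀ᶠ n in atTop,
      (∫⁻ p, ENNReal.ofReal |Wop ν Υ Ω n m (Function.curry f) p.1 p.2 - f p| ∂μ)
        ≤ ENNReal.ofReal (D m * M + ε) := by
    intro ε hε
    have hCm := hadm.C_pos m
    have hCm1 : (0:ℝ) < C m + 1 := by linarith
    set δ : ℝ := ε / (2 * (C m + 1)) with hδdef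
    have hδ : 0 < δ := div_pos hε (by linarith)
    obtain ⟨g, hgsupp, hgapprox, hgcont, hgint⟩ :=
      hf'int.exists_hasCompactSupport_lintegral_sub_le (ε := ENNReal.ofReal δ)
        (ne_of_gt (ENNReal.ofReal_pos.mpr hδ))
    obtain ⟨Mg0, hMg0⟩ := hgsupp.exists_bound_of_continuous hgcont
    set Mg : ℝ := max Mg0 0 with hMgdef
    have hMg : ∀ p, |g p| ≤ Mg := fun p => by
      have := hMg0 p; rw [Real.norm_eq_abs] at this; exact this.trans (le_max_left _ _)
    have hMgnn : (0:ℝ) ≤ Mg := le_max_right _ _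
    have hgu : UniformContinuous g := hgsupp.uniformContinuous_of_continuous hgcont
    obtain ⟨δ₂, hδ₂pos, hδ₂⟩ := Metric.uniformContinuous_iff.mp hgu (ε / 2) (by positivity)
    have hev1 : ∀ᶠ n in atTop, N m < n := eventually_gt_atTop (N m)
    have hev2 : ∀ᶠ n in atTop, fbd m n < δ₂ := (hadm.f_lim m).eventually_lt_const hδ₂pos
    filter_upwards [hev1, hev2] with n hn1 hn2
    -- basic facts about Υ sections
    have hsec : ∀ (γ : G) (b : X), Measurable (fun b' => Υ n γ b b') := fun γ b =>
      (hadm.meas_Υ n γ).comp measurable_prodMk_left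
    have hIγfin : ∀ (γ : G) (b : X), (∫⁻ b', ENNReal.ofReal (Υ n γ b b') ∂ν) ≤ 1 := by
      intro γ b
      rw [← hadm.normalized n b]
      exact ENNReal.le_tsum γ
    have hΥint : ∀ (γ : G) (b : X), Integrable (fun b' => Υ n γ b b') ν := by
      intro γ b
      refine ⟨(hsec γ b).aestronglyMeasurable, ?_⟩
      have heq : ∀ b' : X, ‖Υ n γ b b'‖ₑ = ENNReal.ofReal (Υ n γ b b') := fun b' => by
        rw [Real.enorm_eq_ofReal_abs, abs_of_nonneg (hadm.nonneg_Υ n γ b b')]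
      show (∫⁻ b', ‖Υ n γ b b'‖ₑ ∂ν) < ⊤
      simp only [heq]
      exact lt_of_le_of_lt (hIγfin γ b) ENNReal.one_lt_top
    have hofReal_u : ∀ (γ : G) (b : X),
        ENNReal.ofReal (∫ b', Υ n γ b b' ∂ν) = ∫⁻ b', ENNReal.ofReal (Υ n γ b b') ∂ν :=
      fun γ b => ofReal_integral_eq_lintegral_ofReal (hΥint γ b)
        (Filter.Eventually.of_forall fun b' => hadm.nonneg_Υ n γ b b')
    have hu_nonneg : ∀ (γ : G) (b : X), 0 ≤ ∫ b', Υ n γ b b' ∂ν :=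
      fun γ b => integral_nonneg fun b' => hadm.nonneg_Υ n γ b b'
    have hu_sum : ∀ b : X, Summable (fun γ : G => ∫ b', Υ n γ b b' ∂ν) := by
      intro b
      have h1 : (∑' γ : G, ∫⁻ b', ENNReal.ofReal (Υ n γ b b') ∂ν) ≠ ⊤ := by
        rw [hadm.normalized n b]; exact ENNReal.one_ne_top
      have h2 := ENNReal.summable_toReal h1
      refine h2.congr fun γ => ?_
      rw [← hofReal_u γ b, ENNReal.toReal_ofReal (hu_nonneg γ b)]
    have hu_tsum : ∀ b : X, (∑' γ : G, ∫ b', Υ n γ b b' ∂ν) = 1 := by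
      intro b
      have h1 : ∀ γ : G, (∫⁻ b', ENNReal.ofReal (Υ n γ b b') ∂ν) ≠ ⊤ :=
        fun γ => ((hIγfin γ b).trans_lt ENNReal.one_lt_top).ne
      have h2 := ENNReal.tsum_toReal_eq h1
      rw [hadm.normalized n b, ENNReal.toReal_one] at h2
      calc (∑' γ : G, ∫ b', Υ n γ b b' ∂ν)
          = ∑' γ : G, (∫⁻ b', ENNReal.ofReal (Υ n γ b b') ∂ν).toReal :=
            tsum_congr fun γ => by
              rw [← hofReal_u γ b, ENNReal.toReal_ofReal (hu_nonneg γ b)]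
        _ = 1 := h2.symm
    -- the dominating functions
    set Φ : X × ℝ → ℝ≥0∞ := fun p => ∑' γ : G, ∫⁻ b',
      (Ω n m).indicator (fun _ => (1:ℝ≥0∞)) p.1 * ENNReal.ofReal (Υ n γ p.1 b')
        * ENNReal.ofReal |f' (b', p.2) - g (b', p.2)| ∂ν with hΦdef
    have hhm : Measurable (fun p : X × ℝ => f' p - g p) := hf'm.sub hgcont.measurable
    have hindm : Measurable ((Ω n m).indicator (fun _ => (1:ℝ≥0∞))) :=
      measurable_const.indicator (hΩmeas n)
    have hΦγm : ∀ γ : G, Measurable (fun p : X × ℝ => ∫⁻ b',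
        (Ω n m).indicator (fun _ => (1:ℝ≥0∞)) p.1 * ENNReal.ofReal (Υ n γ p.1 b')
          * ENNReal.ofReal |f' (b', p.2) - g (b', p.2)| ∂ν) := by
      intro γ
      apply Measurable.lintegral_prod_right'
        (f := fun r : (X × ℝ) × X => (Ω n m).indicator (fun _ => (1:ℝ≥0∞)) r.1.1
          * ENNReal.ofReal (Υ n γ r.1.1 r.2) * ENNReal.ofReal |f' (r.2, r.1.2) - g (r.2, r.1.2)|)
      refine Measurable.mul (Measurable.mul ?_ ?_) ?_
      · exact hindm.comp (measurable_fst.comp measurable_fst)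
      · exact ENNReal.measurable_ofReal.comp ((hadm.meas_Υ n γ).comp
          ((measurable_fst.comp measurable_fst).prodMk measurable_snd))
      · exact ENNReal.measurable_ofReal.comp ((hhm.comp
          (measurable_snd.prodMk (measurable_snd.comp measurable_fst))).abs)
    have hΦm : Measurable Φ := Measurable.ennreal_tsum hΦγm
    -- pointwise estimate
    have hpoint : ∀ᵐ p ∂μ,
        ENNReal.ofReal |Wop ν Υ Ω n m (Function.curry f) p.1 p.2 - f p| ≤
          Φ p + (Ω n m).indicator (fun _ => ENNReal.ofReal (ε / 2)) p.1
            + ENNReal.ofReal |f' p - g p|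
            + (if p.1 ∈ Ω n m then 0 else ENNReal.ofReal |f' p|) := by
      filter_upwards [hff', hGood] with p hp hgd
      obtain ⟨b, t⟩ := p
      simp only at hp hgd ⊢
      have hgd1 : ∀ᵐ b' ∂ν, f (b', t) = f' (b', t) := hgd.mono fun b' hx => hx.1
      have hgd2 : ∀ᵐ b' ∂ν, |f' (b', t)| ≤ M := hgd.mono fun b' hx => hx.2
      have hWcongr : Wop ν Υ Ω n m (Function.curry f) b t
          = Wop ν Υ Ω n m (Function.curry f') b t := by
        unfold Wop
        refine tsum_congr fun γ => integral_congr_ae ?_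
        filter_upwards [hgd1] with b' hb'
        simp only [Function.curry_apply, hb']
      rw [hWcongr, hp]
      by_cases hb : b ∈ Ω n m
      · rw [if_pos hb, add_zero, Set.indicator_of_mem hb]
        -- integrability of the sections
        have hmf'sec : Measurable fun b' : X => f' (b', t) :=
          hf'm.comp (measurable_id.prodMk measurable_const)
        have hmgsec : Measurable fun b' : X => g (b', t) :=
          hgcont.measurable.comp (measurable_id.prodMk measurable_const)
        have hif' : ∀ γ : G, Integrable (fun b' => Υ n γ b b' * f' (b', t)) ν := by
          intro γ
          refine Integrable.mono' ((hΥint γ b).const_mul M)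
            ((hsec γ b).mul hmf'sec).aestronglyMeasurable ?_
          filter_upwards [hgd2] with b' h2
          rw [Real.norm_eq_abs, abs_mul, abs_of_nonneg (hadm.nonneg_Υ n γ b b')]
          calc Υ n γ b b' * |f' (b', t)| ≤ Υ n γ b b' * M :=
                mul_le_mul_of_nonneg_left h2 (hadm.nonneg_Υ n γ b b')
            _ = M * Υ n γ b b' := mul_comm _ _
        have hig : ∀ γ : G, Integrable (fun b' => Υ n γ b b' * g (b', t)) ν := by
          intro γ
          refine Integrable.mono' ((hΥint γ b).const_mul Mg)
            ((hsec γ b).mul hmgsec).aestronglyMeasurable ?_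
          refine Filter.Eventually.of_forall fun b' => ?_
          rw [Real.norm_eq_abs, abs_mul, abs_of_nonneg (hadm.nonneg_Υ n γ b b')]
          calc Υ n γ b b' * |g (b', t)| ≤ Υ n γ b b' * Mg :=
                mul_le_mul_of_nonneg_left (hMg _) (hadm.nonneg_Υ n γ b b')
            _ = Mg * Υ n γ b b' := mul_comm _ _
        have hih : ∀ γ : G, Integrable (fun b' => Υ n γ b b' * |f' (b', t) - g (b', t)|) ν := by
          intro γ
          refine Integrable.mono' ((hΥint γ b).const_mul (M + Mg))
            ((hsec γ b).mul ((hmf'sec.sub hmgsec).abs)).aestronglyMeasurable ?_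
          filter_upwards [hgd2] with b' h2
          rw [Real.norm_eq_abs, abs_mul, abs_of_nonneg (hadm.nonneg_Υ n γ b b'),
            abs_abs]
          have h3 : |f' (b', t) - g (b', t)| ≤ M + Mg := by
            calc |f' (b', t) - g (b', t)| ≤ |f' (b', t)| + |g (b', t)| := abs_sub _ _
              _ ≤ M + Mg := add_le_add h2 (hMg _)
          calc Υ n γ b b' * |f' (b', t) - g (b', t)| ≤ Υ n γ b b' * (M + Mg) :=
                mul_le_mul_of_nonneg_left h3 (hadm.nonneg_Υ n γ b b')
            _ = (M + Mg) * Υ n γ b b' := mul_comm _ _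
        -- summability
        have hvS : Summable (fun γ : G => ∫ b', Υ n γ b b' * f' (b', t) ∂ν) := by
          refine Summable.of_norm_bounded (g := fun γ => M * ∫ b', Υ n γ b b' ∂ν)
            ((hu_sum b).mul_left M) fun γ => ?_
          rw [Real.norm_eq_abs]
          calc |∫ b', Υ n γ b b' * f' (b', t) ∂ν|
              ≤ ∫ b', |Υ n γ b b' * f' (b', t)| ∂ν := by
                simpa only [Real.norm_eq_abs] using
                  norm_integral_le_integral_norm (μ := ν) (fun b' => Υ n γ b b' * f' (b', t))
            _ ≤ ∫ b', M * Υ n γ b b' ∂ν := by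
                refine integral_mono_ae (hif' γ).abs ((hΥint γ b).const_mul M) ?_
                filter_upwards [hgd2] with b' h2
                show |Υ n γ b b' * f' (b', t)| ≤ M * Υ n γ b b'
                rw [abs_mul, abs_of_nonneg (hadm.nonneg_Υ n γ b b')]
                calc Υ n γ b b' * |f' (b', t)| ≤ Υ n γ b b' * M :=
                      mul_le_mul_of_nonneg_left h2 (hadm.nonneg_Υ n γ b b')
                  _ = M * Υ n γ b b' := mul_comm _ _
            _ = M * ∫ b', Υ n γ b b' ∂ν := integral_const_mul M _
        have hwS : Summable (fun γ : G => ∫ b', Υ n γ b b' * g (b', t) ∂ν) := by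
          refine Summable.of_norm_bounded (g := fun γ => Mg * ∫ b', Υ n γ b b' ∂ν)
            ((hu_sum b).mul_left Mg) fun γ => ?_
          rw [Real.norm_eq_abs]
          calc |∫ b', Υ n γ b b' * g (b', t) ∂ν|
              ≤ ∫ b', |Υ n γ b b' * g (b', t)| ∂ν := by
                simpa only [Real.norm_eq_abs] using
                  norm_integral_le_integral_norm (μ := ν) (fun b' => Υ n γ b b' * g (b', t))
            _ ≤ ∫ b', Mg * Υ n γ b b' ∂ν := by
                refine integral_mono_ae (hig γ).abs ((hΥint γ b).const_mul Mg)
                  (Filter.Eventually.of_forall fun b' => ?_)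
                show |Υ n γ b b' * g (b', t)| ≤ Mg * Υ n γ b b'
                rw [abs_mul, abs_of_nonneg (hadm.nonneg_Υ n γ b b')]
                calc Υ n γ b b' * |g (b', t)| ≤ Υ n γ b b' * Mg :=
                      mul_le_mul_of_nonneg_left (hMg _) (hadm.nonneg_Υ n γ b b')
                  _ = Mg * Υ n γ b b' := mul_comm _ _
            _ = Mg * ∫ b', Υ n γ b b' ∂ν := integral_const_mul Mg _
        have ha_nonneg : ∀ γ : G, 0 ≤ ∫ b', Υ n γ b b' * |f' (b', t) - g (b', t)| ∂ν :=
          fun γ => integral_nonneg fun b' =>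
            mul_nonneg (hadm.nonneg_Υ n γ b b') (abs_nonneg _)
        have haS : Summable (fun γ : G => ∫ b', Υ n γ b b' * |f' (b', t) - g (b', t)| ∂ν) := by
          refine Summable.of_nonneg_of_le ha_nonneg (fun γ => ?_)
            ((hu_sum b).mul_left (M + Mg))
          calc (∫ b', Υ n γ b b' * |f' (b', t) - g (b', t)| ∂ν)
              ≤ ∫ b', (M + Mg) * Υ n γ b b' ∂ν := by
                refine integral_mono_ae (hih γ) ((hΥint γ b).const_mul (M + Mg)) ?_
                filter_upwards [hgd2] with b' h2
                have h3 : |f' (b', t) - g (b', t)| ≤ M + Mg := by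
                  calc |f' (b', t) - g (b', t)| ≤ |f' (b', t)| + |g (b', t)| := abs_sub _ _
                    _ ≤ M + Mg := add_le_add h2 (hMg _)
                calc Υ n γ b b' * |f' (b', t) - g (b', t)| ≤ Υ n γ b b' * (M + Mg) :=
                      mul_le_mul_of_nonneg_left h3 (hadm.nonneg_Υ n γ b b')
                  _ = (M + Mg) * Υ n γ b b' := mul_comm _ _
            _ = (M + Mg) * ∫ b', Υ n γ b b' ∂ν := integral_const_mul _ _
        -- claim A
        have hvw : ∀ γ : G,
            |(∫ b', Υ n γ b b' * f' (b', t) ∂ν) - ∫ b', Υ n γ b b' * g (b', t) ∂ν|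
              ≤ ∫ b', Υ n γ b b' * |f' (b', t) - g (b', t)| ∂ν := by
          intro γ
          rw [← integral_sub (hif' γ) (hig γ)]
          have h1 : ∀ b' : X, Υ n γ b b' * f' (b', t) - Υ n γ b b' * g (b', t)
              = Υ n γ b b' * (f' (b', t) - g (b', t)) := fun b' => by ring
          simp only [h1]
          calc |∫ b', Υ n γ b b' * (f' (b', t) - g (b', t)) ∂ν|
              ≤ ∫ b', |Υ n γ b b' * (f' (b', t) - g (b', t))| ∂ν := by
                simpa only [Real.norm_eq_abs] using norm_integral_le_integral_norm (μ := ν)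
                  (fun b' => Υ n γ b b' * (f' (b', t) - g (b', t)))
            _ = ∫ b', Υ n γ b b' * |f' (b', t) - g (b', t)| ∂ν := by
                refine integral_congr_ae (Filter.Eventually.of_forall fun b' => ?_)
                show |Υ n γ b b' * (f' (b', t) - g (b', t))|
                  = Υ n γ b b' * |f' (b', t) - g (b', t)|
                rw [abs_mul, abs_of_nonneg (hadm.nonneg_Υ n γ b b')]
        have hA : |(∑' γ : G, ∫ b', Υ n γ b b' * f' (b', t) ∂ν)
              - ∑' γ : G, ∫ b', Υ n γ b b' * g (b', t) ∂ν|
            ≤ ∑' γ : G, ∫ b', Υ n γ b b' * |f' (b', t) - g (b', t)| ∂ν := by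
          rw [← hvS.tsum_sub hwS]
          have h4 := tsum_of_norm_bounded (f := fun γ : G =>
              (∫ b', Υ n γ b b' * f' (b', t) ∂ν) - ∫ b', Υ n γ b b' * g (b', t) ∂ν)
            haS.hasSum (fun γ => by rw [Real.norm_eq_abs]; exact hvw γ)
          simpa only [Real.norm_eq_abs] using h4
        -- claim B
        have hBeach : ∀ γ : G,
            |(∫ b', Υ n γ b b' * g (b', t) ∂ν) - (∫ b', Υ n γ b b' ∂ν) * g (b, t)|
              ≤ ε / 2 * ∫ b', Υ n γ b b' ∂ν := by
          intro γ
          have h1 : (∫ b', Υ n γ b b' ∂ν) * g (b, t) = ∫ b', Υ n γ b b' * g (b, t) ∂ν :=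
            (integral_mul_const _ _).symm
          rw [h1, ← integral_sub (hig γ) ((hΥint γ b).mul_const (g (b, t)))]
          have h2 : ∀ b' : X, Υ n γ b b' * g (b', t) - Υ n γ b b' * g (b, t)
              = Υ n γ b b' * (g (b', t) - g (b, t)) := fun b' => by ring
          simp only [h2]
          have hint2 : Integrable (fun b' => Υ n γ b b' * (g (b', t) - g (b, t))) ν :=
            (hig γ).sub ((hΥint γ b).mul_const (g (b, t))) |>.congr
              (Filter.Eventually.of_forall fun b' => (h2 b'))
          calc |∫ b', Υ n γ b b' * (g (b', t) - g (b, t)) ∂ν|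
              ≤ ∫ b', |Υ n γ b b' * (g (b', t) - g (b, t))| ∂ν := by
                simpa only [Real.norm_eq_abs] using norm_integral_le_integral_norm (μ := ν)
                  (fun b' => Υ n γ b b' * (g (b', t) - g (b, t)))
            _ ≤ ∫ b', Υ n γ b b' * (ε / 2) ∂ν := by
                refine integral_mono_ae hint2.abs ((hΥint γ b).mul_const (ε / 2))
                  (Filter.Eventually.of_forall fun b' => ?_)
                show |Υ n γ b b' * (g (b', t) - g (b, t))| ≤ Υ n γ b b' * (ε / 2)
                rw [abs_mul, abs_of_nonneg (hadm.nonneg_Υ n γ b b')]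
                by_cases hΥpos : 0 < Υ n γ b b'
                · have hcl := hadm.close n m γ b b' hb hΥpos
                  have hd : dist ((b' : X), t) ((b : X), t) < δ₂ := by
                    rw [Prod.dist_eq]
                    simp only [dist_self]
                    refine max_lt ?_ hδ₂pos
                    rw [dist_comm]
                    exact lt_trans hcl.1 hn2
                  have h5 := hδ₂ hd
                  rw [Real.dist_eq] at h5
                  exact mul_le_mul_of_nonneg_left h5.le (hadm.nonneg_Υ n γ b b')
                · have hz : Υ n γ b b' = 0 :=
                    le_antisymm (not_lt.mp hΥpos) (hadm.nonneg_Υ n γ b b')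
                  simp [hz]
            _ = ε / 2 * ∫ b', Υ n γ b b' ∂ν := by
                rw [integral_mul_const]
                ring
        have hB : |(∑' γ : G, ∫ b', Υ n γ b b' * g (b', t) ∂ν) - g (b, t)| ≤ ε / 2 := by
          have huc : (∑' γ : G, (∫ b', Υ n γ b b' ∂ν) * g (b, t)) = g (b, t) := by
            rw [tsum_mul_right, hu_tsum b, one_mul]
          have hsubt : (∑' γ : G, ∫ b', Υ n γ b b' * g (b', t) ∂ν) - g (b, t)
              = ∑' γ : G, ((∫ b', Υ n γ b b' * g (b', t) ∂ν)
                  - (∫ b', Υ n γ b b' ∂ν) * g (b, t)) := by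
            rw [Summable.tsum_sub hwS ((hu_sum b).mul_right (g (b, t))), huc]
          rw [hsubt]
          have h4 := tsum_of_norm_bounded (f := fun γ : G =>
              (∫ b', Υ n γ b b' * g (b', t) ∂ν) - (∫ b', Υ n γ b b' ∂ν) * g (b, t))
            (((hu_sum b).mul_left (ε / 2)).hasSum)
            (fun γ => by rw [Real.norm_eq_abs]; exact hBeach γ)
          rw [Real.norm_eq_abs] at h4
          calc |∑' γ : G, ((∫ b', Υ n γ b b' * g (b', t) ∂ν)
                - (∫ b', Υ n γ b b' ∂ν) * g (b, t))|
              ≤ ∑' γ : G, ε / 2 * ∫ b', Υ n γ b b' ∂ν := h4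
            _ = ε / 2 := by rw [tsum_mul_left, hu_tsum b, mul_one]
        -- unfolding Wop
        have hWf' : Wop ν Υ Ω n m (Function.curry f') b t
            = ∑' γ : G, ∫ b', Υ n γ b b' * f' (b', t) ∂ν := by
          unfold Wop
          refine tsum_congr fun γ => ?_
          refine integral_congr_ae (Filter.Eventually.of_forall fun b' => ?_)
          simp [Set.indicator_of_mem hb, Function.curry_apply]
        -- the triangle inequality
        have htri : |Wop ν Υ Ω n m (Function.curry f') b t - f' (b, t)|
            ≤ (∑' γ : G, ∫ b', Υ n γ b b' * |f' (b', t) - g (b', t)| ∂ν)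
              + (ε / 2 + |f' (b, t) - g (b, t)|) := by
          rw [hWf']
          have e1 : (∑' γ : G, ∫ b', Υ n γ b b' * f' (b', t) ∂ν) - f' (b, t)
              = ((∑' γ : G, ∫ b', Υ n γ b b' * f' (b', t) ∂ν)
                  - ∑' γ : G, ∫ b', Υ n γ b b' * g (b', t) ∂ν)
                + ((∑' γ : G, ∫ b', Υ n γ b b' * g (b', t) ∂ν) - g (b, t))
                + (g (b, t) - f' (b, t)) := by ring
          rw [e1]
          have h4 := abs_add_three
            ((∑' γ : G, ∫ b', Υ n γ b b' * f' (b', t) ∂ν)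
              - ∑' γ : G, ∫ b', Υ n γ b b' * g (b', t) ∂ν)
            ((∑' γ : G, ∫ b', Υ n γ b b' * g (b', t) ∂ν) - g (b, t))
            (g (b, t) - f' (b, t))
          have h5 : |g (b, t) - f' (b, t)| = |f' (b, t) - g (b, t)| := abs_sub_comm _ _
          linarith [hA, hB]
        -- pass to ENNReal
        have hΦbound : ENNReal.ofReal
            (∑' γ : G, ∫ b', Υ n γ b b' * |f' (b', t) - g (b', t)| ∂ν) ≤ Φ (b, t) := by
          rw [ENNReal.ofReal_tsum_of_nonneg ha_nonneg haS]
          simp only [hΦdef]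
          refine le_of_eq (tsum_congr fun γ => ?_)
          rw [ofReal_integral_eq_lintegral_ofReal (hih γ)
            (Filter.Eventually.of_forall fun b' =>
              mul_nonneg (hadm.nonneg_Υ n γ b b') (abs_nonneg _))]
          refine lintegral_congr fun b' => ?_
          rw [Set.indicator_of_mem hb, one_mul,
            ENNReal.ofReal_mul (hadm.nonneg_Υ n γ b b')]
        calc ENNReal.ofReal |Wop ν Υ Ω n m (Function.curry f') b t - f' (b, t)|
            ≤ ENNReal.ofReal
                ((∑' γ : G, ∫ b', Υ n γ b b' * |f' (b', t) - g (b', t)| ∂ν)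
                  + (ε / 2 + |f' (b, t) - g (b, t)|)) := ENNReal.ofReal_le_ofReal htri
          _ ≤ ENNReal.ofReal (∑' γ : G, ∫ b', Υ n γ b b' * |f' (b', t) - g (b', t)| ∂ν)
              + ENNReal.ofReal (ε / 2 + |f' (b, t) - g (b, t)|) := ENNReal.ofReal_add_le
          _ ≤ ENNReal.ofReal (∑' γ : G, ∫ b', Υ n γ b b' * |f' (b', t) - g (b', t)| ∂ν)
              + (ENNReal.ofReal (ε / 2) + ENNReal.ofReal |f' (b, t) - g (b, t)|) :=
                add_le_add le_rfl ENNReal.ofReal_add_le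
          _ ≤ Φ (b, t) + (ENNReal.ofReal (ε / 2) + ENNReal.ofReal |f' (b, t) - g (b, t)|) :=
                add_le_add hΦbound le_rfl
          _ = Φ (b, t) + ENNReal.ofReal (ε / 2) + ENNReal.ofReal |f' (b, t) - g (b, t)| :=
                (add_assoc _ _ _).symm
      · have hW0 : Wop ν Υ Ω n m (Function.curry f') b t = 0 := by
          unfold Wop
          simp [Set.indicator_of_notMem hb]
        rw [hW0, if_neg hb, zero_sub, abs_neg]
        exact le_add_self
    -- integrate the pointwise estimate
    have hQ3 : (∫⁻ p, ENNReal.ofReal |f' p - g p| ∂μ) ≤ ENNReal.ofReal δ := by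
      refine le_trans (le_of_eq ?_) hgapprox
      refine lintegral_congr fun p => ?_
      rw [← Real.enorm_eq_ofReal_abs]
    have hQ1 : (∫⁻ p, Φ p ∂μ) ≤ ENNReal.ofReal (C m) * ENNReal.ofReal δ := by
      have hHm : Measurable (fun p : X × ℝ => ENNReal.ofReal |f' p - g p|) :=
        ENNReal.measurable_ofReal.comp hhm.abs
      have hK : ∀ᵐ b' ∂ν, (∑' γ : G, ∫⁻ b, (Ω n m).indicator (fun _ => (1:ℝ≥0∞)) b
          * ENNReal.ofReal (Υ n γ b b') ∂ν) ≤ ENNReal.ofReal (C m) := by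
        filter_upwards [hadm.bdd₁ m n hn1] with b' hb'
        have h1 : ∀ γ : G, (∫⁻ b, (Ω n m).indicator (fun _ => (1:ℝ≥0∞)) b
            * ENNReal.ofReal (Υ n γ b b') ∂ν)
              = ∫⁻ b in Ω n m, ENNReal.ofReal (Υ n γ b b') ∂ν := by
          intro γ
          rw [← lintegral_indicator (hΩmeas n)]
          refine lintegral_congr fun b => ?_
          by_cases hbb : b ∈ Ω n m <;> simp [hbb]
        calc (∑' γ : G, ∫⁻ b, (Ω n m).indicator (fun _ => (1:ℝ≥0∞)) b
              * ENNReal.ofReal (Υ n γ b b') ∂ν)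
            = ∑' γ : G, ∫⁻ b in Ω n m, ENNReal.ofReal (Υ n γ b b') ∂ν := tsum_congr h1
          _ = ∫⁻ b in Ω n m, ∑' γ : G, ENNReal.ofReal (Υ n γ b b') ∂ν :=
              (lintegral_tsum fun γ => (ENNReal.measurable_ofReal.comp
                ((hadm.meas_Υ n γ).comp
                  (measurable_id.prodMk measurable_const))).aemeasurable).symm
          _ ≤ ENNReal.ofReal (C m) := hb'
      have hmeasA : ∀ (γ : G) (t : ℝ), Measurable (fun r : X × X =>
          (Ω n m).indicator (fun _ => (1:ℝ≥0∞)) r.1 * ENNReal.ofReal (Υ n γ r.1 r.2)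
            * ENNReal.ofReal |f' (r.2, t) - g (r.2, t)|) := by
        intro γ t
        refine Measurable.mul (Measurable.mul ?_ ?_) ?_
        · exact hindm.comp measurable_fst
        · exact ENNReal.measurable_ofReal.comp (hadm.meas_Υ n γ)
        · exact ENNReal.measurable_ofReal.comp
            ((hhm.comp (measurable_snd.prodMk measurable_const)).abs)
      have hKγm : ∀ γ : G, Measurable (fun b' : X => ∫⁻ b, (Ω n m).indicator
          (fun _ => (1:ℝ≥0∞)) b * ENNReal.ofReal (Υ n γ b b') ∂ν) := by
        intro γ
        apply Measurable.lintegral_prod_right' (f := fun r : X × X =>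
          (Ω n m).indicator (fun _ => (1:ℝ≥0∞)) r.2 * ENNReal.ofReal (Υ n γ r.2 r.1))
        exact (hindm.comp measurable_snd).mul (ENNReal.measurable_ofReal.comp
          ((hadm.meas_Υ n γ).comp (measurable_snd.prodMk measurable_fst)))
      have hinner : ∀ t : ℝ, (∫⁻ b, Φ (b, t) ∂ν)
          ≤ ENNReal.ofReal (C m) * ∫⁻ b', ENNReal.ofReal |f' (b', t) - g (b', t)| ∂ν := by
        intro t
        have hmt : Measurable (fun b' : X => ENNReal.ofReal |f' (b', t) - g (b', t)|) :=
          ENNReal.measurable_ofReal.comp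
            ((hhm.comp (measurable_id.prodMk measurable_const)).abs)
        calc (∫⁻ b, Φ (b, t) ∂ν)
            = ∑' γ : G, ∫⁻ b, ∫⁻ b', (Ω n m).indicator (fun _ => (1:ℝ≥0∞)) b
                * ENNReal.ofReal (Υ n γ b b')
                * ENNReal.ofReal |f' (b', t) - g (b', t)| ∂ν ∂ν := by
              simp only [hΦdef]
              exact lintegral_tsum fun γ => (Measurable.lintegral_prod_right'
                (f := fun r : X × X => (Ω n m).indicator (fun _ => (1:ℝ≥0∞)) r.1
                  * ENNReal.ofReal (Υ n γ r.1 r.2)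
                  * ENNReal.ofReal |f' (r.2, t) - g (r.2, t)|) (hmeasA γ t)).aemeasurable
          _ = ∑' γ : G, ∫⁻ b', ∫⁻ b, (Ω n m).indicator (fun _ => (1:ℝ≥0∞)) b
                * ENNReal.ofReal (Υ n γ b b')
                * ENNReal.ofReal |f' (b', t) - g (b', t)| ∂ν ∂ν :=
              tsum_congr fun γ => lintegral_lintegral_swap (hmeasA γ t).aemeasurable
          _ = ∑' γ : G, ∫⁻ b', (∫⁻ b, (Ω n m).indicator (fun _ => (1:ℝ≥0∞)) b
                * ENNReal.ofReal (Υ n γ b b') ∂ν)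
                * ENNReal.ofReal |f' (b', t) - g (b', t)| ∂ν := by
              refine tsum_congr fun γ => lintegral_congr fun b' => ?_
              have hmul : Measurable (fun b : X => (Ω n m).indicator (fun _ => (1:ℝ≥0∞)) b
                  * ENNReal.ofReal (Υ n γ b b')) := by
                apply hindm.mul
                exact ENNReal.measurable_ofReal.comp ((hadm.meas_Υ n γ).comp
                  (measurable_id.prodMk measurable_const))
              rw [lintegral_mul_const _ hmul]
          _ = ∫⁻ b', (∑' γ : G, ∫⁻ b, (Ω n m).indicator (fun _ => (1:ℝ≥0∞)) b
                * ENNReal.ofReal (Υ n γ b b') ∂ν)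
                * ENNReal.ofReal |f' (b', t) - g (b', t)| ∂ν := by
              rw [← lintegral_tsum (f := fun γ b' => (∫⁻ b, (Ω n m).indicator (fun _ => (1:ℝ≥0∞)) b
                * ENNReal.ofReal (Υ n γ b b') ∂ν) * ENNReal.ofReal |f' (b', t) - g (b', t)|)
                fun γ => ((hKγm γ).mul hmt).aemeasurable]
              refine lintegral_congr fun b' => ?_
              rw [ENNReal.tsum_mul_right]
          _ ≤ ∫⁻ b', ENNReal.ofReal (C m) * ENNReal.ofReal |f' (b', t) - g (b', t)| ∂ν := by
              refine lintegral_mono_ae ?_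
              filter_upwards [hK] with b' hb'
              exact mul_le_mul_left hb' _
          _ = ENNReal.ofReal (C m) * ∫⁻ b', ENNReal.ofReal |f' (b', t) - g (b', t)| ∂ν := by
              rw [lintegral_const_mul _ hmt]
      calc (∫⁻ p, Φ p ∂μ) = ∫⁻ t, ∫⁻ b, Φ (b, t) ∂ν ∂theta :=
            lintegral_prod_symm Φ hΦm.aemeasurable
        _ ≤ ∫⁻ t, ENNReal.ofReal (C m)
              * ∫⁻ b', ENNReal.ofReal |f' (b', t) - g (b', t)| ∂ν ∂theta :=
            lintegral_mono hinner
        _ = ENNReal.ofReal (C m)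
              * ∫⁻ t, ∫⁻ b', ENNReal.ofReal |f' (b', t) - g (b', t)| ∂ν ∂theta := by
            rw [lintegral_const_mul]
            exact Measurable.lintegral_prod_right' (f := fun r : ℝ × X =>
              ENNReal.ofReal |f' (r.2, r.1) - g (r.2, r.1)|) (ENNReal.measurable_ofReal.comp
                ((hhm.comp (measurable_snd.prodMk measurable_fst)).abs))
        _ = ENNReal.ofReal (C m) * ∫⁻ p, ENNReal.ofReal |f' p - g p| ∂μ := by
            rw [lintegral_prod_symm _ hHm.aemeasurable]
        _ ≤ ENNReal.ofReal (C m) * ENNReal.ofReal δ := mul_le_mul_right hQ3 _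
    have hψ2m : Measurable (fun p : X × ℝ =>
        (Ω n m).indicator (fun _ => ENNReal.ofReal (ε / 2)) p.1) :=
      (measurable_const.indicator (hΩmeas n)).comp measurable_fst
    have hψ3m : Measurable (fun p : X × ℝ => ENNReal.ofReal |f' p - g p|) :=
      ENNReal.measurable_ofReal.comp hhm.abs
    have hQ2 : (∫⁻ p, (Ω n m).indicator (fun _ => ENNReal.ofReal (ε / 2)) p.1 ∂μ)
        ≤ ENNReal.ofReal (ε / 2) := by
      calc (∫⁻ p, (Ω n m).indicator (fun _ => ENNReal.ofReal (ε / 2)) p.1 ∂μ)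
          ≤ ∫⁻ _, ENNReal.ofReal (ε / 2) ∂μ := by
            refine lintegral_mono fun p => ?_
            by_cases hbp : p.1 ∈ Ω n m <;> simp [hbp]
        _ = ENNReal.ofReal (ε / 2) := by rw [lintegral_const, measure_univ, mul_one]
    have hQ4 : (∫⁻ p, (if p.1 ∈ Ω n m then 0 else ENNReal.ofReal |f' p|) ∂μ)
        ≤ ENNReal.ofReal (M * D m) := by
      have hcompl : ν ((Ω n m)ᶜ) ≤ ENNReal.ofReal (D m) := by
        by_cases hD1 : 1 ≤ D m
        · calc ν ((Ω n m)ᶜ) ≤ 1 := prob_le_one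
            _ ≤ ENNReal.ofReal (D m) := by
              rw [← ENNReal.ofReal_one]; exact ENNReal.ofReal_le_ofReal hD1
        · push_neg at hD1
          have hbig := hadm.Ω_big n m
          have h1 : ν ((Ω n m)ᶜ) = 1 - ν (Ω n m) := by
            rw [measure_compl (hΩmeas n) (measure_ne_top ν _), measure_univ]
          rw [h1]
          have h2 : ENNReal.ofReal (1 - D m) = 1 - ENNReal.ofReal (D m) := by
            rw [ENNReal.ofReal_sub 1 (hadm.D_pos m).le, ENNReal.ofReal_one]
          calc (1 : ℝ≥0∞) - ν (Ω n m) ≤ 1 - ENNReal.ofReal (1 - D m) :=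
                tsub_le_tsub le_rfl hbig.le
            _ = 1 - (1 - ENNReal.ofReal (D m)) := by rw [h2]
            _ = ENNReal.ofReal (D m) := ENNReal.sub_sub_cancel ENNReal.one_ne_top (by
                  rw [← ENNReal.ofReal_one]; exact ENNReal.ofReal_le_ofReal hD1.le)
      calc (∫⁻ p, (if p.1 ∈ Ω n m then 0 else ENNReal.ofReal |f' p|) ∂μ)
          ≤ ∫⁻ p, (((Ω n m)ᶜ ×ˢ (Set.univ : Set ℝ)).indicator
              (fun _ => ENNReal.ofReal M) p) ∂μ := by
            refine lintegral_mono_ae ?_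
            filter_upwards [hMae] with p hp
            by_cases hbp : p.1 ∈ Ω n m
            · simp [hbp]
            · rw [if_neg hbp, Set.indicator_of_mem (show p ∈ (Ω n m)ᶜ ×ˢ (Set.univ : Set ℝ)
                from ⟨hbp, Set.mem_univ _⟩)]
              exact ENNReal.ofReal_le_ofReal hp
        _ = ENNReal.ofReal M * μ (((Ω n m)ᶜ) ×ˢ (Set.univ : Set ℝ)) := by
            rw [lintegral_indicator ((hΩmeas n).compl.prod MeasurableSet.univ),
              setLIntegral_const]
        _ = ENNReal.ofReal M * ν ((Ω n m)ᶜ) := by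
            rw [hμdef, Measure.prod_prod, measure_univ, mul_one]
        _ ≤ ENNReal.ofReal M * ENNReal.ofReal (D m) := mul_le_mul_right hcompl _
        _ = ENNReal.ofReal (M * D m) := (ENNReal.ofReal_mul hM0).symm
    calc (∫⁻ p, ENNReal.ofReal |Wop ν Υ Ω n m (Function.curry f) p.1 p.2 - f p| ∂μ)
        ≤ ∫⁻ p, (Φ p + (Ω n m).indicator (fun _ => ENNReal.ofReal (ε / 2)) p.1
            + ENNReal.ofReal |f' p - g p|
            + (if p.1 ∈ Ω n m then 0 else ENNReal.ofReal |f' p|)) ∂μ :=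
          lintegral_mono_ae hpoint
      _ = (∫⁻ p, Φ p ∂μ)
          + (∫⁻ p, (Ω n m).indicator (fun _ => ENNReal.ofReal (ε / 2)) p.1 ∂μ)
          + (∫⁻ p, ENNReal.ofReal |f' p - g p| ∂μ)
          + (∫⁻ p, (if p.1 ∈ Ω n m then 0 else ENNReal.ofReal |f' p|) ∂μ) := by
        rw [lintegral_add_left (f := fun p => Φ p + (Ω n m).indicator
            (fun _ => ENNReal.ofReal (ε / 2)) p.1 + ENNReal.ofReal |f' p - g p|) ((hΦm.add hψ2m).add hψ3m),
          lintegral_add_left (f := fun p => Φ p + (Ω n m).indicator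
            (fun _ => ENNReal.ofReal (ε / 2)) p.1) (hΦm.add hψ2m), lintegral_add_left hΦm]
      _ ≤ ENNReal.ofReal (C m) * ENNReal.ofReal δ + ENNReal.ofReal (ε / 2)
          + ENNReal.ofReal δ + ENNReal.ofReal (M * D m) := by
        exact add_le_add (add_le_add (add_le_add hQ1 hQ2) hQ3) hQ4
      _ ≤ ENNReal.ofReal (D m * M + ε) := by
        rw [← ENNReal.ofReal_mul hCm.le, ← ENNReal.ofReal_add (by positivity) (by positivity),
          ← ENNReal.ofReal_add (by positivity) (by positivity),
          ← ENNReal.ofReal_add (by positivity) (mul_nonneg hM0 (hadm.D_pos m).le)]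
        refine ENNReal.ofReal_le_ofReal ?_
        have hkey : (C m + 1) * δ = ε / 2 := by
          rw [hδdef]; field_simp
        nlinarith [hkey]
  -- conclusion from the key estimate
  have hF0 : ∀ n : ℕ, 0 ≤ ∫ p, |Wop ν Υ Ω n m (Function.curry f) p.1 p.2 - f p| ∂μ :=
    fun n => integral_nonneg fun p => abs_nonneg _
  refine le_of_forall_pos_le_add fun ε hε => ?_
  refine limsup_le_of_le (isCoboundedUnder_le_of_le atTop hF0) ?_
  filter_upwards [key ε hε] with n hn
  by_cases hi : Integrable (fun p => |Wop ν Υ Ω n m (Function.curry f) p.1 p.2 - f p|) μ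
  · rw [integral_eq_lintegral_of_nonneg_ae (Filter.Eventually.of_forall fun p => abs_nonneg _)
      hi.1]
    refine ENNReal.toReal_le_of_le_ofReal (by nlinarith [hadm.D_pos m, hM0, hε.le]) ?_
    exact hn
  · rw [integral_undef hi]
    nlinarith [hadm.D_pos m, hM0, hε.le]
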